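/- If the generalized reaping number 𝔯_θ equals 2^θ for an infinite cardinal θ, then the strong polarized relation (2^θ, θ) → (2^θ, θ)^{1,1}_2 fails: there is a coloring c : 2^θ × θ → 2 admitting no monochromatic product A × B with |A| = 2^θ and |B| = θ. -/

import Mathlib

open Cardinal Set

/-- For an infinite cardinal `θ` (represented by the type `θ.ord.ToType`),
`S` splits `B` if both `B ∩ S` and `B \ S` have cardinality `θ`. -/
def SplitsTheta (θ : Cardinal) (S B : Set θ.ord.ToType) : Prop :=
  #(B ∩ S : Set θ.ord.ToType) = θ ∧ #(B \ S : Set θ.ord.ToType) = θ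

/-- The generalized reaping number `𝔯_θ`. -/
noncomputable def reapingNumberTheta (θ : Cardinal) : Cardinal :=
  sInf {c : Cardinal | ∃ R : Set (Set θ.ord.ToType), (∀ B ∈ R, #B = θ) ∧
    (∀ S : Set θ.ord.ToType, ∃ B ∈ R, ¬ SplitsTheta θ S B) ∧ #R = c}

/-- Any family of `θ`-sized sets of size `< 𝔯_θ` admits a single splitter. -/
lemma exists_splitter (θ : Cardinal) (R : Set (Set θ.ord.ToType))
    (hR : ∀ B ∈ R, #B = θ) (hlt : #R < reapingNumberTheta θ) :
    ∃ S : Set θ.ord.ToType, ∀ B ∈ R, SplitsTheta θ S B := by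
  by_contra hcon
  push_neg at hcon
  have : #R ∈ {c : Cardinal | ∃ R : Set (Set θ.ord.ToType), (∀ B ∈ R, #B = θ) ∧
      (∀ S : Set θ.ord.ToType, ∃ B ∈ R, ¬ SplitsTheta θ S B) ∧ #R = c} :=
    ⟨R, hR, hcon, rfl⟩
  exact absurd (csInf_le' this) (not_le.mpr hlt)

theorem neg_polarized_of_reapingNumberTheta_eq_two_pow
    (θ : Cardinal) (hθ : ℵ₀ ≤ θ) (h : reapingNumberTheta θ = 2 ^ θ) :
    ∃ c : (2 ^ θ : Cardinal).ord.ToType × θ.ord.ToType → Bool,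
      ∀ A : Set (2 ^ θ : Cardinal).ord.ToType, ∀ B : Set θ.ord.ToType,
        #A = 2 ^ θ → #B = θ →
          ¬ ∃ v : Bool, ∀ a ∈ A, ∀ b ∈ B, c (a, b) = v := by
  classical
  set κ := (2 ^ θ : Cardinal).ord.ToType with hκ
  have hθinf : ℵ₀ ≤ (2 : Cardinal) ^ θ := hθ.trans (le_of_lt (cantor θ))
  -- the type θ.ord.ToType has cardinality θ
  have hmkθ : #θ.ord.ToType = θ := by rw [Cardinal.mk_toType, card_ord]
  -- surjection from κ onto all θ-sized subsets
  have hne : Nonempty {B : Set θ.ord.ToType // #B = θ} :=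
    ⟨⟨univ, by rw [mk_univ, hmkθ]⟩⟩
  have hle : #{B : Set θ.ord.ToType // #B = θ} ≤ #κ := by
    rw [hκ, Cardinal.mk_toType, card_ord]
    calc #{B : Set θ.ord.ToType // #B = θ} ≤ #(Set θ.ord.ToType) := mk_subtype_le _
      _ = 2 ^ θ := by rw [mk_set, hmkθ]
  obtain ⟨g⟩ := hle
  have hgsurj : Function.Surjective (Function.invFun g.toFun) :=
    Function.invFun_surjective g.injective
  set f : κ → Set θ.ord.ToType := fun x => (Function.invFun g.toFun x).1
    with hf
  have hfθ : ∀ x, #(f x) = θ := fun x => (Function.invFun g.toFun x).2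
  -- choose splitters by recursion (really: by choice, using initial segments)
  have hS : ∀ x : κ, ∃ S : Set θ.ord.ToType, ∀ y : κ, y < x → SplitsTheta θ S (f y) := by
    intro x
    have hcard : #(f '' (Iio x)) < reapingNumberTheta θ := by
      rw [h]
      exact lt_of_le_of_lt (mk_image_le) (Cardinal.mk_Iio_ord_toType x)
    obtain ⟨S, hSs⟩ := exists_splitter θ (f '' (Iio x))
      (by rintro B ⟨y, _, rfl⟩; exact hfθ y) hcard
    exact ⟨S, fun y hy => hSs (f y) ⟨y, hy, rfl⟩⟩
  choose S hSspec using hS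
  refine ⟨fun p => decide (p.2 ∈ S p.1), ?_⟩
  rintro A B hA hB ⟨v, hv⟩
  -- find y with f y = B
  obtain ⟨y, hy⟩ := hgsurj ⟨B, hB⟩
  have hfy : f y = B := congrArg Subtype.val hy
  -- find x ∈ A with y < x
  have hxA : ∃ x ∈ A, y < x := by
    by_contra hc
    push_neg at hc
    have hsub : A ⊆ Iic y := fun x hx => hc x hx
    have hle2 : #A ≤ #(Iic y) := mk_le_mk_of_subset hsub
    rw [hA] at hle2
    have hIic : #(Iic y) < 2 ^ θ := by
      have h1 : (Iic y : Set κ) ⊆ insert y (Iio y) := by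
        intro z hz
        rcases lt_or_eq_of_le (mem_Iic.mp hz) with h' | h'
        · exact Or.inr h'
        · exact Or.inl h'
      calc #(Iic y) ≤ #(insert y (Iio y) : Set κ) := mk_le_mk_of_subset h1
        _ ≤ #(Iio y) + 1 := mk_insert_le
        _ < 2 ^ θ := add_lt_of_lt hθinf (Cardinal.mk_Iio_ord_toType y)
          (one_lt_aleph0.trans_le hθinf)
    exact absurd hle2 (not_le.mpr hIic)
  obtain ⟨x, hxA', hyx⟩ := hxA
  have hsplit : SplitsTheta θ (S x) B := hfy ▸ hSspec x y hyx
  have hpos : (0 : Cardinal) < θ := lt_of_lt_of_le aleph0_pos hθ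
  obtain ⟨b1, hb1⟩ : (B ∩ S x).Nonempty := by
    rw [← nonempty_coe_sort, ← mk_ne_zero_iff, hsplit.1]; exact hpos.ne'
  obtain ⟨b2, hb2⟩ : (B \ S x).Nonempty := by
    rw [← nonempty_coe_sort, ← mk_ne_zero_iff, hsplit.2]; exact hpos.ne'
  have h1 : decide (b1 ∈ S x) = v := hv x hxA' b1 hb1.1
  have h2 : decide (b2 ∈ S x) = v := hv x hxA' b2 hb2.1
  rw [decide_eq_true hb1.2] at h1
  rw [decide_eq_false hb2.2] at h2
  simp at h1 h2; rw [h1] at h2; simp at h2
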